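/- If the smeared observables A_Λ(j) = Σ_i Λ(j−i)|φ_i⟩⟨φ_i| and B_Γ(k) = Σ_i Γ(k−i)|ψ_i⟩⟨ψ_i| are jointly measurable (i.e., admit a POVM on Z_d×Z_d with these marginals), then they admit a joint observable which is a covariant phase space observable C_T for some density operator T. -/

import Mathlib

set_option linter.unusedSectionVars false


open Matrix Kronecker Finset
open scoped ComplexOrder

/-- ω = e^{2πi/d} -/
noncomputable def ww (d : ℕ) : ℂ := Complex.exp (2 * Real.pi * Complex.I / d)

/-- shift unitary U_x φ_k = φ_{k+x} -/
noncomputable def Um (d : ℕ) (x : ZMod d) : Matrix (ZMod d) (ZMod d) ℂ :=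
  fun i j => if i = j + x then 1 else 0

/-- modulation unitary V_y φ_k = ω^{yk} φ_k -/
noncomputable def Vm (d : ℕ) (y : ZMod d) : Matrix (ZMod d) (ZMod d) ℂ :=
  Matrix.diagonal fun i => ww d ^ (y * i).val

/-- finite Fourier transform F φ_k = (1/√d) Σ_h ω^{-hk} φ_h -/
noncomputable def Fm (d : ℕ) : Matrix (ZMod d) (ZMod d) ℂ :=
  fun i j => (1 / Real.sqrt d : ℂ) * (ww d)⁻¹ ^ (i * j).val

/-- the standard orthonormal basis vector φ_k -/
noncomputable def phiV (d : ℕ) (k : ZMod d) : ZMod d → ℂ := Pi.single k 1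

/-- ψ_k = F* φ_k -/
noncomputable def psiV (d : ℕ) [NeZero d] (k : ZMod d) : ZMod d → ℂ :=
  (Fm d)ᴴ.mulVec (phiV d k)

/-- A(j) = |φ_j⟩⟨φ_j| -/
noncomputable def Aob (d : ℕ) (j : ZMod d) : Matrix (ZMod d) (ZMod d) ℂ :=
  vecMulVec (phiV d j) (star (phiV d j))

/-- B(k) = |ψ_k⟩⟨ψ_k| -/
noncomputable def Bob (d : ℕ) [NeZero d] (k : ZMod d) : Matrix (ZMod d) (ZMod d) ℂ :=
  vecMulVec (psiV d k) (star (psiV d k))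


section helpers
variable (d : ℕ) [NeZero d]

noncomputable def ee (a : ZMod d) : ℂ := ww d ^ a.val

lemma ww_pow_d : ww d ^ d = 1 := by
  rw [ww, ← Complex.exp_nat_mul]
  have hd : (d : ℂ) ≠ 0 := Nat.cast_ne_zero.2 (NeZero.ne d)
  rw [mul_div_cancel₀ _ hd, Complex.exp_two_pi_mul_I]

lemma ww_ne_zero : ww d ≠ 0 := Complex.exp_ne_zero _

lemma ee_mul (a b : ZMod d) : ee d a * ee d b = ee d (a + b) := by
  rw [ee, ee, ee, ← pow_add]
  conv_lhs => rw [← Nat.mod_add_div (a.val + b.val) d]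
  rw [pow_add, pow_mul, ww_pow_d, one_pow, mul_one, ZMod.val_add]

lemma ee_zero : ee d 0 = 1 := by rw [ee, ZMod.val_zero, pow_zero]

lemma ee_ne_zero (a : ZMod d) : ee d a ≠ 0 := pow_ne_zero _ (ww_ne_zero d)

lemma ee_mul_neg (a : ZMod d) : ee d a * ee d (-a) = 1 := by
  rw [ee_mul, add_neg_cancel, ee_zero]

lemma conj_ww : (starRingEnd ℂ) (ww d) = (ww d)⁻¹ := by
  rw [ww, ← Complex.exp_conj, ← Complex.exp_neg]
  congr 1
  simp only [map_div₀, _root_.map_mul, Complex.conj_I, map_ofNat,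
    Complex.conj_ofReal, map_natCast]
  ring

lemma conj_ee (a : ZMod d) : (starRingEnd ℂ) (ee d a) = ee d (-a) := by
  have h := ee_mul_neg d a
  simp only [ee] at h ⊢
  rw [map_pow, conj_ww]
  rw [inv_pow]
  exact (eq_inv_of_mul_eq_one_right h).symm

end helpers

section conj
variable (d : ℕ) [NeZero d]

noncomputable def conjf (x y : ZMod d) (M : Matrix (ZMod d) (ZMod d) ℂ) :
    Matrix (ZMod d) (ZMod d) ℂ :=
  Matrix.of fun i j => ee d (y * (i - x)) * ee d (-(y * (j - x))) * M (i - x) (j - x)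

lemma Um_mul_apply (x : ZMod d) (N : Matrix (ZMod d) (ZMod d) ℂ) (i j : ZMod d) :
    (Um d x * N) i j = N (i - x) j := by
  simp only [Um, Matrix.mul_apply, ite_mul, one_mul, zero_mul, ← sub_eq_iff_eq_add]
  rw [Finset.sum_ite_eq (Finset.univ : Finset (ZMod d)) (i - x) (fun m => N m j)]
  simp

lemma mul_UmH_apply (x : ZMod d) (N : Matrix (ZMod d) (ZMod d) ℂ) (i j : ZMod d) :
    (N * (Um d x)ᴴ) i j = N i (j - x) := by
  simp only [Um, Matrix.mul_apply, Matrix.conjTranspose_apply, apply_ite star, star_one, star_zero,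
    mul_ite, mul_one, mul_zero, ← sub_eq_iff_eq_add]
  rw [Finset.sum_ite_eq (Finset.univ : Finset (ZMod d)) (j - x) (fun m => N i m)]
  simp

lemma Vm_eq (y : ZMod d) : Vm d y = Matrix.diagonal fun i => ee d (y * i) := rfl

lemma VmH_eq (y : ZMod d) : (Vm d y)ᴴ = Matrix.diagonal fun i => ee d (-(y * i)) := by
  ext i j
  rw [Matrix.conjTranspose_apply, Vm_eq]
  rcases eq_or_ne i j with h | h
  · subst h
    rw [Matrix.diagonal_apply_eq, Matrix.diagonal_apply_eq]
    exact conj_ee d (y * i)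
  · rw [Matrix.diagonal_apply_ne _ (Ne.symm h), Matrix.diagonal_apply_ne _ h, star_zero]


lemma conjf_eq (x y : ZMod d) (M : Matrix (ZMod d) (ZMod d) ℂ) :
    Um d x * Vm d y * M * (Vm d y)ᴴ * (Um d x)ᴴ = conjf d x y M := by
  ext i j
  rw [mul_UmH_apply, VmH_eq, Matrix.mul_diagonal]
  rw [show Um d x * Vm d y * M = Um d x * (Vm d y * M) from by rw [Matrix.mul_assoc]]
  rw [Um_mul_apply, Vm_eq, Matrix.diagonal_mul, conjf, Matrix.of_apply]
  ring

lemma conjf_comp (j k x y : ZMod d) (M : Matrix (ZMod d) (ZMod d) ℂ) :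
    conjf d j k (conjf d x y M) = conjf d (j + x) (k + y) M := by
  ext p q
  simp only [conjf, Matrix.of_apply]
  rw [show p - j - x = p - (j + x) from by ring, show q - j - x = q - (j + x) from by ring]
  calc ee d (k * (p - j)) * ee d (-(k * (q - j))) *
        (ee d (y * (p - (j + x))) * ee d (-(y * (q - (j + x)))) * M (p - (j + x)) (q - (j + x)))
      = (ee d (k * (p - j)) * ee d (-(k * (q - j))) *
         (ee d (y * (p - (j + x))) * ee d (-(y * (q - (j + x)))))) *
          M (p - (j + x)) (q - (j + x)) := by ring
    _ = ee d ((k + y) * (p - (j + x)) + -((k + y) * (q - (j + x)))) *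
          M (p - (j + x)) (q - (j + x)) := by
        simp only [ee_mul]
        exact congrArg (fun t => ee d t * M (p - (j + x)) (q - (j + x))) (by ring)
    _ = ee d ((k + y) * (p - (j + x))) * ee d (-((k + y) * (q - (j + x)))) *
          M (p - (j + x)) (q - (j + x)) := by rw [ee_mul]

lemma conjf_sum {α : Type*} (s : Finset α) (x y : ZMod d) (f : α → Matrix (ZMod d) (ZMod d) ℂ) :
    conjf d x y (∑ a ∈ s, f a) = ∑ a ∈ s, conjf d x y (f a) := by
  ext p q
  simp only [conjf, Matrix.of_apply, Matrix.sum_apply, Finset.mul_sum]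

lemma conjf_smul (x y : ZMod d) (c : ℂ) (M : Matrix (ZMod d) (ZMod d) ℂ) :
    conjf d x y (c • M) = c • conjf d x y M := by
  ext p q
  simp [conjf]
  ring

lemma conjf_trace (x y : ZMod d) (M : Matrix (ZMod d) (ZMod d) ℂ) :
    (conjf d x y M).trace = M.trace := by
  simp only [Matrix.trace, Matrix.diag, conjf, Matrix.of_apply]
  rw [show (∑ i : ZMod d, ee d (y * (i - x)) * ee d (-(y * (i - x))) * M (i - x) (i - x)) =
      ∑ i : ZMod d, M (i - x) (i - x) from by
    refine Finset.sum_congr rfl fun i _ => ?_; rw [ee_mul_neg, one_mul]]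
  exact Fintype.sum_equiv (Equiv.subRight x) _ _ (fun i => rfl)

end conj

section obs
variable (d : ℕ) [NeZero d]

lemma Aob_apply (i p q : ZMod d) :
    Aob d i p q = (if p = i then 1 else 0) * (if q = i then 1 else 0) := by
  simp [Aob, vecMulVec_apply, phiV, Pi.single_apply, apply_ite star]

lemma conjf_Aob (x y i : ZMod d) : conjf d x y (Aob d i) = Aob d (i + x) := by
  ext p q
  simp only [conjf, Matrix.of_apply, Aob_apply]
  simp only [sub_eq_iff_eq_add]
  split_ifs with hp hq
  · subst hp; subst hq
    simp only [add_sub_cancel_right, mul_one]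
    exact ee_mul_neg d (y * i)
  all_goals ring

lemma psiV_apply (k m : ZMod d) :
    psiV d k m = (1 / Real.sqrt d : ℂ) * ee d (k * m) := by
  simp only [psiV, Matrix.mulVec, dotProduct, phiV, Matrix.conjTranspose_apply, Fm]
  rw [Finset.sum_eq_single k]
  · simp only [Pi.single_eq_same, mul_one, Complex.star_def, _root_.map_mul, map_pow,
      map_inv₀, conj_ww, inv_inv, map_div₀, _root_.map_one, Complex.conj_ofReal]
    rfl
  · intro b _ hb
    simp [Pi.single_eq_of_ne hb]
  · simp

lemma Bob_apply (k p q : ZMod d) :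
    Bob d k p q = (1 / d : ℂ) * (ee d (k * p) * ee d (-(k * q))) := by
  have hd : (0:ℝ) ≤ d := Nat.cast_nonneg d
  simp only [Bob, vecMulVec_apply, Pi.star_apply, psiV_apply]
  rw [star_mul']
  rw [show (star (ee d (k * q)) : ℂ) = (starRingEnd ℂ) (ee d (k * q)) from rfl, conj_ee]
  rw [show (star ((1 : ℂ) / Real.sqrt d) : ℂ) = (1 : ℂ) / Real.sqrt d from by
    simp [Complex.star_def, Complex.conj_ofReal]]
  have hs : ((1 : ℂ) / Real.sqrt d) * ((1 : ℂ) / Real.sqrt d) = (1 / d : ℂ) := by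
    rw [div_mul_div_comm, one_mul, ← Complex.ofReal_mul, Real.mul_self_sqrt hd, Complex.ofReal_natCast]
  calc (1 / Real.sqrt d : ℂ) * ee d (k * p) * ((1 / Real.sqrt d : ℂ) * ee d (-(k * q)))
      = ((1 / Real.sqrt d : ℂ) * (1 / Real.sqrt d : ℂ)) * (ee d (k * p) * ee d (-(k * q))) := by
        ring
    _ = (1 / d : ℂ) * (ee d (k * p) * ee d (-(k * q))) := by rw [hs]

lemma conjf_Bob (x y k : ZMod d) : conjf d x y (Bob d k) = Bob d (k + y) := by
  ext p q
  simp only [conjf, Matrix.of_apply, Bob_apply]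
  calc ee d (y * (p - x)) * ee d (-(y * (q - x))) *
        ((1 / d : ℂ) * (ee d (k * (p - x)) * ee d (-(k * (q - x)))))
      = (1 / d : ℂ) * (ee d (y * (p - x)) * ee d (-(y * (q - x))) *
          (ee d (k * (p - x)) * ee d (-(k * (q - x))))) := by ring
    _ = (1 / d : ℂ) * (ee d ((k + y) * p) * ee d (-((k + y) * q))) := by
        simp only [ee_mul]
        exact congrArg _ (congrArg (ee d) (by ring))

end obs

section psd
variable (d : ℕ) [NeZero d]

lemma conjf_as_conj (x y : ZMod d) (M : Matrix (ZMod d) (ZMod d) ℂ) :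
    conjf d x y M = (Um d x * Vm d y) * M * (Um d x * Vm d y)ᴴ := by
  rw [← conjf_eq, Matrix.conjTranspose_mul, ← Matrix.mul_assoc]

lemma psd_smul {n : Type*} [Fintype n] {M : Matrix n n ℂ} (hM : M.PosSemidef) {c : ℝ}
    (hc : 0 ≤ c) : ((c : ℂ) • M).PosSemidef := by
  constructor
  · rw [Matrix.IsHermitian, Matrix.conjTranspose_smul, hM.1, Complex.star_def,
      Complex.conj_ofReal]
  · intro v
    have hc' : (0:ℂ) ≤ (c : ℂ) := by exact_mod_cast hc
    convert smul_nonneg hc' (hM.2 v) using 1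
    simp only [smul_eq_mul, Finsupp.mul_sum, Matrix.smul_apply]
    congr 1; ext i xi; congr 1; ext j xj; ring

lemma trace_Aob (i : ZMod d) : (Aob d i).trace = 1 := by
  simp only [Matrix.trace, Matrix.diag, Aob_apply]
  rw [Finset.sum_eq_single i] <;> simp +contextual

lemma sum_shift {M : Type*} [AddCommMonoid M] (f : ZMod d → M) (t : ZMod d) :
    ∑ i : ZMod d, f (t - i) = ∑ i : ZMod d, f i :=
  Fintype.sum_equiv (Equiv.subLeft t) _ _ (fun i => rfl)

lemma sum_shift' {M : Type*} [AddCommMonoid M] (f : ZMod d → M) (t : ZMod d) :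
    ∑ i : ZMod d, f (i - t) = ∑ i : ZMod d, f i :=
  Fintype.sum_equiv (Equiv.subRight t) _ _ (fun i => rfl)

end psd

theorem jointly_measurable_implies_covariant_joint (d : ℕ) (hd : 2 ≤ d) [NeZero d]
    (Λ Γ : ZMod d → ℝ) (hΛpos : ∀ i, 0 ≤ Λ i) (hΛsum : ∑ i : ZMod d, Λ i = 1)
    (hΓpos : ∀ i, 0 ≤ Γ i) (hΓsum : ∑ i : ZMod d, Γ i = 1)
    (C : ZMod d → ZMod d → Matrix (ZMod d) (ZMod d) ℂ)
    (hpos : ∀ j k, (C j k).PosSemidef)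
    (hmargA : ∀ j, ∑ k : ZMod d, C j k = ∑ i : ZMod d, (Λ (j - i) : ℂ) • Aob d i)
    (hmargB : ∀ k, ∑ j : ZMod d, C j k = ∑ i : ZMod d, (Γ (k - i) : ℂ) • Bob d i) :
    ∃ T : Matrix (ZMod d) (ZMod d) ℂ, T.PosSemidef ∧ T.trace = 1 ∧
      (∀ j : ZMod d, ∑ k : ZMod d,
          (1 / d : ℂ) • (Um d j * Vm d k * T * (Vm d k)ᴴ * (Um d j)ᴴ) =
        ∑ i : ZMod d, (Λ (j - i) : ℂ) • Aob d i) ∧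
      (∀ k : ZMod d, ∑ j : ZMod d,
          (1 / d : ℂ) • (Um d j * Vm d k * T * (Vm d k)ᴴ * (Um d j)ᴴ) =
        ∑ i : ZMod d, (Γ (k - i) : ℂ) • Bob d i) := by
  have hdC : (d : ℂ) ≠ 0 := Nat.cast_ne_zero.2 (NeZero.ne d)
  set T0 : Matrix (ZMod d) (ZMod d) ℂ :=
    ∑ x : ZMod d, ∑ y : ZMod d, conjf d x y (C (-x) (-y)) with hT0
  -- the conjugated T0
  have hconj : ∀ j k : ZMod d,
      Um d j * Vm d k * ((1 / d : ℂ) • T0) * (Vm d k)ᴴ * (Um d j)ᴴ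
        = (1 / d : ℂ) • ∑ x : ZMod d, ∑ y : ZMod d, conjf d x y (C (j - x) (k - y)) := by
    intro j k
    simp only [Matrix.mul_smul, Matrix.smul_mul]
    congr 1
    rw [conjf_eq d j k T0, hT0]
    simp only [conjf_sum, conjf_comp]
    refine Fintype.sum_equiv (Equiv.addLeft j) _ _ (fun x => ?_)
    simp only [Equiv.coe_addLeft]
    refine Fintype.sum_equiv (Equiv.addLeft k) _ _ (fun y => ?_)
    simp only [Equiv.coe_addLeft]
    rw [show j - (j + x) = -x from by ring, show k - (k + y) = -y from by ring]
  -- the double sum of a constant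
  have hconst : ∀ A : Matrix (ZMod d) (ZMod d) ℂ,
      ((1 / d : ℂ) * (1 / d : ℂ)) • ∑ _x : ZMod d, ∑ _y : ZMod d, A = A := by
    intro A
    simp only [Finset.sum_const, Finset.card_univ, ZMod.card d,
      ← Nat.cast_smul_eq_nsmul ℂ, smul_smul]
    rw [show (1 / d : ℂ) * (1 / d : ℂ) * ((d : ℂ) * (d : ℂ)) = 1 from by field_simp]
    rw [one_smul]
  refine ⟨(1 / d : ℂ) • T0, ?_, ?_, ?_, ?_⟩
  · -- positive semidefinite
    have h0 : T0.PosSemidef := by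
      rw [hT0]
      refine Finset.sum_induction _ _ (fun a b ha hb => ha.add hb) Matrix.PosSemidef.zero
        (fun x _ => ?_)
      refine Finset.sum_induction _ _ (fun a b ha hb => ha.add hb) Matrix.PosSemidef.zero
        (fun y _ => ?_)
      rw [conjf_as_conj]
      exact (hpos _ _).mul_mul_conjTranspose_same _
    have : (1 / d : ℂ) = ((1 / d : ℝ) : ℂ) := by push_cast; ring
    rw [this]
    exact psd_smul h0 (by positivity)
  · -- trace
    have htr : T0.trace = d := by
      rw [hT0]
      simp only [Matrix.trace_sum, conjf_trace]
      rw [Fintype.sum_equiv (Equiv.neg (ZMod d))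
        (fun x => ∑ y : ZMod d, (C (-x) (-y)).trace)
        (fun x => ∑ y : ZMod d, (C x (-y)).trace) (fun x => by simp)]
      rw [Finset.sum_congr rfl (fun x (_ : x ∈ Finset.univ) =>
        Fintype.sum_equiv (Equiv.neg (ZMod d)) (fun y => (C x (-y)).trace)
          (fun y => (C x y).trace) (fun y => by simp))]
      have : ∀ x : ZMod d, ∑ y : ZMod d, (C x y).trace = 1 := by
        intro x
        rw [← Matrix.trace_sum, hmargA x, Matrix.trace_sum]
        simp only [Matrix.trace_smul, trace_Aob, smul_eq_mul, mul_one]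
        rw [← Complex.ofReal_sum, sum_shift d Λ x, hΛsum, Complex.ofReal_one]
      rw [Finset.sum_congr rfl (fun x _ => this x), Finset.sum_const, Finset.card_univ,
        ZMod.card d, nsmul_eq_mul, mul_one]
    rw [Matrix.trace_smul, htr, smul_eq_mul]
    field_simp
  · -- marginal A
    intro j
    simp only [hconj, smul_smul]
    rw [← Finset.smul_sum, Finset.sum_comm]
    rw [Finset.sum_congr rfl (fun x (_ : x ∈ Finset.univ) =>
      (Finset.sum_comm : (∑ k : ZMod d, ∑ y : ZMod d, conjf d x y (C (j - x) (k - y)))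
        = ∑ y : ZMod d, ∑ k : ZMod d, conjf d x y (C (j - x) (k - y))))]
    have hinner : ∀ x y : ZMod d,
        ∑ k : ZMod d, conjf d x y (C (j - x) (k - y))
          = ∑ i : ZMod d, (Λ (j - i) : ℂ) • Aob d i := by
      intro x y
      rw [← conjf_sum, sum_shift' d (fun k => C (j - x) k) y, hmargA (j - x), conjf_sum]
      rw [Finset.sum_congr rfl (fun i (_ : i ∈ Finset.univ) => by
        rw [conjf_smul, conjf_Aob])]
      refine Fintype.sum_equiv (Equiv.addRight x) _ _ (fun i => ?_)
      simp only [Equiv.coe_addRight]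
      rw [show j - x - i = j - (i + x) from by ring]
    rw [Finset.sum_congr rfl (fun x (_ : x ∈ Finset.univ) =>
      Finset.sum_congr rfl (fun y _ => hinner x y))]
    exact hconst _
  · -- marginal B
    intro k
    simp only [hconj, smul_smul]
    rw [← Finset.smul_sum, Finset.sum_comm]
    rw [Finset.sum_congr rfl (fun x (_ : x ∈ Finset.univ) =>
      (Finset.sum_comm : (∑ j : ZMod d, ∑ y : ZMod d, conjf d x y (C (j - x) (k - y)))
        = ∑ y : ZMod d, ∑ j : ZMod d, conjf d x y (C (j - x) (k - y))))]
    have hinner : ∀ x y : ZMod d,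
        ∑ j : ZMod d, conjf d x y (C (j - x) (k - y))
          = ∑ i : ZMod d, (Γ (k - i) : ℂ) • Bob d i := by
      intro x y
      rw [← conjf_sum, sum_shift' d (fun j => C j (k - y)) x, hmargB (k - y), conjf_sum]
      rw [Finset.sum_congr rfl (fun i (_ : i ∈ Finset.univ) => by
        rw [conjf_smul, conjf_Bob])]
      refine Fintype.sum_equiv (Equiv.addRight y) _ _ (fun i => ?_)
      simp only [Equiv.coe_addRight]
      rw [show k - y - i = k - (i + y) from by ring]
    rw [Finset.sum_congr rfl (fun x (_ : x ∈ Finset.univ) =>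
      Finset.sum_congr rfl (fun y _ => hinner x y))]
    exact hconst _
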